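/- Let f : ℝ → ℝ be convex, let C be an n×n Hermitian complex matrix, and let v ∈ ℂⁿ be a unit vector. Then ⟨v, f(C)v⟩ ≥ f(⟨v, Cv⟩), where both inner products are real numbers since C and f(C) are Hermitian. -/

import Mathlib

open Matrix

/-- `f` applied to a Hermitian matrix through a spectral decomposition
(continuous functional calculus): `f(C) = U · diag(f(λᵢ)) · U*`. -/
noncomputable def IsHermitian.applyFun {n : ℕ} {C : Matrix (Fin n) (Fin n) ℂ}
    (hC : C.IsHermitian) (f : ℝ → ℝ) : Matrix (Fin n) (Fin n) ℂ :=
  (hC.eigenvectorUnitary : Matrix (Fin n) (Fin n) ℂ) *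
    Matrix.diagonal (fun i => (f (hC.eigenvalues i) : ℂ)) *
    star (hC.eigenvectorUnitary : Matrix (Fin n) (Fin n) ℂ)

/-- For convex `f`, a Hermitian matrix `C` and a unit vector `v`,
one has `⟨v, f(C) v⟩ ≥ f(⟨v, C v⟩)`. -/
theorem inner_applyFun_ge {n : ℕ} (f : ℝ → ℝ) (hf : ConvexOn ℝ Set.univ f)
    (C : Matrix (Fin n) (Fin n) ℂ) (hC : C.IsHermitian)
    (v : Fin n → ℂ) (hv : star v ⬝ᵥ v = 1) :
    f ((star v ⬝ᵥ (C *ᵥ v)).re) ≤ (star v ⬝ᵥ ((IsHermitian.applyFun hC f) *ᵥ v)).re := by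
  set U : Matrix (Fin n) (Fin n) ℂ := (hC.eigenvectorUnitary : Matrix (Fin n) (Fin n) ℂ) with hU
  set w : Fin n → ℂ := star U *ᵥ v with hw
  have key : ∀ d : Fin n → ℂ,
      star v ⬝ᵥ ((U * diagonal d * star U) *ᵥ v)
        = ∑ i, d i * ((starRingEnd ℂ) (w i) * w i) := by
    intro d
    have h1 : (U * diagonal d * star U) *ᵥ v = U *ᵥ (diagonal d *ᵥ w) := by
      rw [hw, mulVec_mulVec, mulVec_mulVec, Matrix.mul_assoc]
    rw [h1, dotProduct_mulVec]
    have hsw : star v ᵥ* U = star w := by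
      rw [hw, Matrix.star_mulVec, Matrix.star_eq_conjTranspose, conjTranspose_conjTranspose]
    rw [hsw]
    simp only [dotProduct, Pi.star_apply, mulVec_diagonal, Complex.star_def]
    exact Finset.sum_congr rfl fun i _ => by ring
  set a : Fin n → ℝ := fun i => Complex.normSq (w i) with ha
  have hwa : ∀ i, (starRingEnd ℂ) (w i) * w i = (a i : ℂ) := fun i => by
    rw [ha, mul_comm, Complex.mul_conj]
  have hsum1 : ∑ i, a i = 1 := by
    have h0 := key (fun _ => (1 : ℂ))
    rw [show Matrix.diagonal (fun _ : Fin n => (1 : ℂ)) = 1 from Matrix.diagonal_one,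
      mul_one, (Matrix.mem_unitaryGroup_iff).mp hC.eigenvectorUnitary.2, one_mulVec, hv] at h0
    have : ((∑ i, a i : ℝ) : ℂ) = 1 := by
      push_cast
      rw [h0]
      exact Finset.sum_congr rfl fun i _ => by rw [one_mul, hwa i]
    exact_mod_cast this
  have hC' : star v ⬝ᵥ (C *ᵥ v) = ∑ i, ((hC.eigenvalues i : ℂ)) * (a i : ℂ) := by
    conv_lhs => rw [hC.spectral_theorem]
    rw [Unitary.conjStarAlgAut_apply, ← hU, key]
    exact Finset.sum_congr rfl fun i _ => by rw [hwa i]; rfl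
  have hF : star v ⬝ᵥ ((IsHermitian.applyFun hC f) *ᵥ v)
      = ∑ i, ((f (hC.eigenvalues i) : ℂ)) * (a i : ℂ) := by
    rw [IsHermitian.applyFun, key]
    exact Finset.sum_congr rfl fun i _ => by rw [hwa i]
  have hCre : (star v ⬝ᵥ (C *ᵥ v)).re = ∑ i, hC.eigenvalues i * a i := by
    rw [hC', Complex.re_sum]
    simp
  have hFre : (star v ⬝ᵥ ((IsHermitian.applyFun hC f) *ᵥ v)).re
      = ∑ i, f (hC.eigenvalues i) * a i := by
    rw [hF, Complex.re_sum]
    simp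
  rw [hCre, hFre]
  have := hf.map_sum_le (t := Finset.univ) (w := a) (p := hC.eigenvalues)
    (fun i _ => Complex.normSq_nonneg _) hsum1 (fun i _ => Set.mem_univ _)
  simpa [smul_eq_mul, mul_comm] using this
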